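/- Let G = G₁ × ⋯ × G_m, where G₁,…,G_m are finitely generated groups, each with finitely many conjugacy classes, with generating sets S₁,…,S_m, and equip G with the generating set S = S₁ ⊔ ⋯ ⊔ S_m. (a) If each Gᵢ has an independent signature sequence, then G has an independent signature sequence. (b) If each Gᵢ has an independent signature sequence with a lower triangular independent signature matrix (with respect to some ordering of its conjugacy classes), then so does G. -/

import Mathlib

/-- Words over the alphabet `ι` with prescribed signature `α`: the word `w` has signature `α`
if each letter `i` occurs exactly `α i` times in `w`. -/
def sigSet {ι : Type*} [DecidableEq ι] (α : ι → ℕ) : Set (List ι) :=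
  {w | ∀ i, w.count i = α i}

/-- The signature vector `V_α` of a signature `α`, with respect to a family of group elements
`s : ι → G` and an enumeration `C : Fin r → ConjClasses G` of (some) conjugacy classes: its
`j`-th entry is the number of words of signature `α` whose product lies in the class `C j`. -/
noncomputable def sigVec {ι G : Type*} [DecidableEq ι] [Group G] (s : ι → G) {r : ℕ}
    (C : Fin r → ConjClasses G) (α : ι → ℕ) : Fin r → ℚ :=
  fun j => ((sigSet α ∩ {w | (w.map s).prod ∈ (C j).carrier}).ncard : ℚ)

/-- The group `G`, with generating family `s : ι → G`, has an *independent signature sequence*: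
there are an enumeration `C₁, …, C_r` of all conjugacy classes of `G` and signatures
`α₁, …, α_r` whose signature vectors `V_{α₁}, …, V_{α_r}` are linearly independent. -/
def HasISS {ι G : Type*} [DecidableEq ι] [Group G] (s : ι → G) : Prop :=
  ∃ (r : ℕ) (C : Fin r → ConjClasses G) (α : Fin r → ι → ℕ),
    Function.Bijective C ∧ LinearIndependent ℚ (fun i => sigVec s C (α i))

/-- The group `G`, with generating family `s : ι → G`, has an independent signature sequence
whose independent signature matrix is lower triangular with respect to some ordering of the
conjugacy classes of `G`. -/
def HasISSLT {ι G : Type*} [DecidableEq ι] [Group G] (s : ι → G) : Prop :=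
  ∃ (r : ℕ) (C : Fin r → ConjClasses G) (α : Fin r → ι → ℕ),
    Function.Bijective C ∧ LinearIndependent ℚ (fun i => sigVec s C (α i)) ∧
    ∀ i j : Fin r, i < j → sigVec s C (α i) j = 0

namespace ISSAux

open Function List

set_option linter.unusedSectionVars false

variable {m : ℕ} {ι : Fin m → Type} [∀ i, DecidableEq (ι i)]

/-- projection of a word over `Σ j, ι j` to its `i`-th component subword -/
def proj (i : Fin m) (w : List (Σ j, ι j)) : List (ι i) :=
  w.filterMap fun p => if h : p.1 = i then some (h ▸ p.2) else none

@[simp] lemma proj_nil (i : Fin m) : proj i ([] : List (Σ j, ι j)) = [] := rfl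

lemma proj_cons_same (i : Fin m) (a : ι i) (w : List (Σ j, ι j)) :
    proj i (⟨i, a⟩ :: w) = a :: proj i w := by
  simp [proj, List.filterMap_cons]

lemma proj_cons_ne {i j : Fin m} (h : j ≠ i) (a : ι j) (w : List (Σ j, ι j)) :
    proj i (⟨j, a⟩ :: w) = proj i w := by
  simp [proj, List.filterMap_cons, h]

lemma count_proj (i : Fin m) (a : ι i) (w : List (Σ j, ι j)) :
    (proj i w).count a = w.count ⟨i, a⟩ := by
  induction w with
  | nil => simp
  | cons p t ih =>
    rcases p with ⟨j, b⟩
    by_cases hj : j = i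
    · subst hj
      rw [proj_cons_same]
      by_cases hb : b = a
      · subst hb; simp [ih]
      · rw [List.count_cons, List.count_cons, ih]
        simp [hb, Sigma.ext_iff]
    · rw [proj_cons_ne hj, List.count_cons, ih]
      simp [Sigma.ext_iff, hj]

lemma length_proj (i : Fin m) (w : List (Σ j, ι j)) :
    (proj i w).length = (w.map Sigma.fst).count i := by
  induction w with
  | nil => simp
  | cons p t ih =>
    rcases p with ⟨j, b⟩
    by_cases hj : j = i
    · subst hj; rw [proj_cons_same]; simp [ih]
    · rw [proj_cons_ne hj, List.map_cons, List.count_cons_of_ne hj, ih]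

lemma prod_apply {G : Fin m → Type} [∀ i, Group (G i)] (s : ∀ i, ι i → G i)
    (w : List (Σ j, ι j)) (i : Fin m) :
    (w.map fun p : Σ j, ι j => (Pi.mulSingle p.1 (s p.1 p.2) : ∀ j, G j)).prod i
      = ((proj i w).map (s i)).prod := by
  induction w with
  | nil => simp
  | cons p t ih =>
    rcases p with ⟨j, b⟩
    by_cases hj : j = i
    · subst hj
      rw [proj_cons_same]
      simp only [List.map_cons, List.prod_cons, Pi.mul_apply, ih]
      simp
    · rw [proj_cons_ne hj]
      simp only [List.map_cons, List.prod_cons, Pi.mul_apply, ih]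
      rw [Pi.mulSingle_eq_of_ne (Ne.symm hj), one_mul]

/-- merge a pattern word `u` over `Fin m` with component words `f i`. -/
def merge : List (Fin m) → (∀ i, List (ι i)) → List (Σ i, ι i)
  | [], _ => []
  | i :: u, f =>
    ((f i).head?.map fun a => (⟨i, a⟩ : Σ j, ι j)).toList
      ++ merge u (Function.update f i (f i).tail)

lemma merge_cons {u : List (Fin m)} {f : ∀ i, List (ι i)} {i : Fin m} {a : ι i}
    {t : List (ι i)} (h : f i = a :: t) :
    merge (i :: u) f = ⟨i, a⟩ :: merge u (Function.update f i t) := by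
  simp [merge, h]

lemma merge_proj (w : List (Σ j, ι j)) :
    merge (w.map Sigma.fst) (fun i => proj i w) = w := by
  induction w with
  | nil => rfl
  | cons p t ih =>
    rcases p with ⟨i, a⟩
    have hf : proj i (⟨i, a⟩ :: t) = a :: proj i t := proj_cons_same i a t
    rw [List.map_cons, merge_cons hf]
    have : Function.update (fun j => proj j (⟨i, a⟩ :: t)) i (proj i t)
        = fun j => proj j t := by
      funext j
      by_cases hj : j = i
      · subst hj; simp
      · rw [Function.update_of_ne hj, proj_cons_ne (Ne.symm hj)]
    rw [this, ih]

lemma proj_merge (u : List (Fin m)) (f : ∀ i, List (ι i))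
    (h : ∀ i, (f i).length = u.count i) :
    (merge u f).map Sigma.fst = u ∧ ∀ i, proj i (merge u f) = f i := by
  induction u generalizing f with
  | nil =>
    have hf : ∀ i, f i = [] := fun i => List.length_eq_zero_iff.mp (by simp [h i])
    refine ⟨rfl, fun i => ?_⟩
    simp [merge, hf i]
  | cons i u ih =>
    have hlen : (f i).length = u.count i + 1 := by
      rw [h i, List.count_cons_self]
    obtain ⟨a, t, hf⟩ : ∃ a t, f i = a :: t := by
      cases hfi : f i with
      | nil => rw [hfi] at hlen; simp at hlen
      | cons a t => exact ⟨a, t, rfl⟩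
    rw [merge_cons hf]
    set f' := Function.update f i t with hf'
    have hlen' : ∀ j, (f' j).length = u.count j := by
      intro j
      by_cases hj : j = i
      · subst hj
        rw [hf', Function.update_self]
        have := hlen
        rw [hf] at this
        simpa using this
      · rw [hf', Function.update_of_ne hj, h j, List.count_cons_of_ne (Ne.symm hj)]
    obtain ⟨h1, h2⟩ := ih f' hlen'
    refine ⟨by simp [h1], fun j => ?_⟩
    by_cases hj : j = i
    · subst hj
      rw [proj_cons_same, h2 j, hf', Function.update_self, hf]
    · rw [proj_cons_ne (Ne.symm hj), h2 j, hf', Function.update_of_ne hj]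

lemma length_eq_sum_count {κ : Type*} [DecidableEq κ] [Fintype κ] (w : List κ) :
    w.length = ∑ a, w.count a := by
  have := Multiset.sum_count_eq_card (s := Finset.univ) (m := (w : Multiset κ))
    (fun a _ => Finset.mem_univ a)
  simpa using this.symm

lemma exists_list_count {κ : Type*} [DecidableEq κ] [Fintype κ] (n : κ → ℕ) :
    ∃ u : List κ, ∀ i, u.count i = n i := by
  refine ⟨(∑ i, (n i • {i} : Multiset κ)).toList, fun j => ?_⟩
  have : ((∑ i, (n i • {i} : Multiset κ)).toList : Multiset κ)
      = ∑ i, (n i • {i} : Multiset κ) := Multiset.coe_toList _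
  rw [← Multiset.coe_count, this]
  rw [Multiset.count_sum']
  simp [Multiset.count_singleton]

lemma patterns_finite (n : Fin m → ℕ) :
    {u : List (Fin m) | ∀ i, u.count i = n i}.Finite := by
  apply Set.Finite.subset (List.finite_length_eq (Fin m) (∑ i, n i))
  intro u hu
  simp only [Set.mem_setOf_eq] at hu ⊢
  rw [length_eq_sum_count u]
  exact Finset.sum_congr rfl fun i _ => hu i

lemma patterns_ncard_pos (n : Fin m → ℕ) :
    0 < {u : List (Fin m) | ∀ i, u.count i = n i}.ncard := by
  rw [Set.ncard_pos (patterns_finite n)]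
  obtain ⟨u, hu⟩ := exists_list_count n
  exact ⟨u, hu⟩

section Conj

variable {m : ℕ} {G : Fin m → Type} [∀ i, Group (G i)]

lemma isConj_pi_iff {x y : ∀ i, G i} : IsConj x y ↔ ∀ i, IsConj (x i) (y i) := by
  constructor
  · intro h i
    rw [isConj_iff] at h ⊢
    obtain ⟨c, hc⟩ := h
    exact ⟨c i, by rw [← hc]; simp⟩
  · intro h
    choose c hc using fun i => isConj_iff.1 (h i)
    rw [isConj_iff]
    exact ⟨fun i => c i, funext fun i => by simpa using hc i⟩

/-- the componentwise conjugacy class map -/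
def classPi : ConjClasses (∀ i, G i) → ∀ i, ConjClasses (G i) :=
  fun c i => c.map (Pi.evalMonoidHom G i)

lemma classPi_mk (x : ∀ i, G i) :
    classPi (ConjClasses.mk x) = fun i => ConjClasses.mk (x i) := rfl

lemma classPi_bijective : Function.Bijective (classPi (G := G)) := by
  constructor
  · intro c d h
    obtain ⟨x, rfl⟩ := ConjClasses.mk_surjective c
    obtain ⟨y, rfl⟩ := ConjClasses.mk_surjective d
    rw [ConjClasses.mk_eq_mk_iff_isConj, isConj_pi_iff]
    exact fun i => ConjClasses.mk_eq_mk_iff_isConj.mp (congrFun h i)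
  · intro v
    refine ⟨ConjClasses.mk (fun i => Quotient.out (v i)), ?_⟩
    funext i
    show ConjClasses.mk (Quotient.out (v i)) = v i
    rw [← ConjClasses.quotient_mk_eq_mk]
    exact Quotient.out_eq _

/-- the equivalence between tuples of conjugacy classes and conjugacy classes of the product -/
noncomputable def eBij : (∀ i, ConjClasses (G i)) ≃ ConjClasses (∀ i, G i) :=
  (Equiv.ofBijective _ classPi_bijective).symm

lemma mem_carrier_eBij {x : ∀ i, G i} {v : ∀ i, ConjClasses (G i)} :
    x ∈ (eBij v).carrier ↔ ∀ i, x i ∈ (v i).carrier := by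
  rw [ConjClasses.mem_carrier_iff_mk_eq]
  show ConjClasses.mk x = (Equiv.ofBijective _ classPi_bijective).symm v ↔ _
  rw [Equiv.eq_symm_apply]
  rw [show (Equiv.ofBijective _ classPi_bijective) (ConjClasses.mk x)
      = classPi (ConjClasses.mk x) from rfl]
  rw [funext_iff]
  simp only [classPi_mk, ConjClasses.mem_carrier_iff_mk_eq]

variable {ι : Fin m → Type} [∀ i, DecidableEq (ι i)] [∀ i, Fintype (ι i)]

lemma card_eq (s : ∀ i, ι i → G i) (αv : ∀ i, ι i → ℕ) (cv : ∀ i, ConjClasses (G i)) :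
    (sigSet (fun p : Σ i, ι i => αv p.1 p.2) ∩
        {w | (w.map fun p : Σ i, ι i => (Pi.mulSingle p.1 (s p.1 p.2) : ∀ j, G j)).prod
          ∈ (eBij cv).carrier}).ncard
      = {u : List (Fin m) | ∀ i, u.count i = ∑ a, αv i a}.ncard *
        ∏ i, (sigSet (αv i) ∩ {w | (w.map (s i)).prod ∈ (cv i).carrier}).ncard := by
  classical
  set A : Set (List (Σ i, ι i)) := sigSet (fun p : Σ i, ι i => αv p.1 p.2) ∩
      {w | (w.map fun p : Σ i, ι i => (Pi.mulSingle p.1 (s p.1 p.2) : ∀ j, G j)).prod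
        ∈ (eBij cv).carrier} with hA
  set P : Set (List (Fin m)) := {u | ∀ i, u.count i = ∑ a, αv i a} with hP
  set B : ∀ i, Set (List (ι i)) :=
    fun i => sigSet (αv i) ∩ {w | (w.map (s i)).prod ∈ (cv i).carrier} with hB
  have E : A ≃ (P × ∀ i, B i) := by
    refine
      { toFun := fun w => (⟨(w : List (Σ i, ι i)).map Sigma.fst, ?_⟩,
          fun i => ⟨proj i (w : List (Σ i, ι i)), ?_, ?_⟩)
        invFun := fun uf => ⟨merge uf.1 (fun i => (uf.2 i : List (ι i))), ?_, ?_⟩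
        left_inv := ?_
        right_inv := ?_ }
    · -- pattern counts
      intro i
      obtain ⟨hw1, _⟩ := w.2
      rw [← length_proj, length_eq_sum_count]
      exact Finset.sum_congr rfl fun a _ => by rw [count_proj]; exact hw1 ⟨i, a⟩
    · -- component signature
      intro a
      obtain ⟨hw1, _⟩ := w.2
      rw [count_proj]
      exact hw1 ⟨i, a⟩
    · -- component product in class
      obtain ⟨_, hw2⟩ := w.2
      show ((proj i (w : List (Σ i, ι i))).map (s i)).prod ∈ (cv i).carrier
      rw [← prod_apply]
      exact mem_carrier_eBij.mp hw2 i
    · -- merged word has right signature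
      have hlen : ∀ i, ((uf.2 i : List (ι i))).length = uf.1.1.count i := by
        intro i
        obtain ⟨hf1, _⟩ := (uf.2 i).2
        rw [length_eq_sum_count, (uf.1.2 i)]
        exact Finset.sum_congr rfl fun a _ => hf1 a
      obtain ⟨hm1, hm2⟩ := proj_merge uf.1.1 _ hlen
      intro p
      obtain ⟨i, a⟩ := p
      rw [← count_proj, hm2 i]
      exact (uf.2 i).2.1 a
    · -- merged word product in class
      have hlen : ∀ i, ((uf.2 i : List (ι i))).length = uf.1.1.count i := by
        intro i
        obtain ⟨hf1, _⟩ := (uf.2 i).2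
        rw [length_eq_sum_count, (uf.1.2 i)]
        exact Finset.sum_congr rfl fun a _ => hf1 a
      obtain ⟨hm1, hm2⟩ := proj_merge uf.1.1 _ hlen
      show (_ : ∀ j, G j) ∈ (eBij cv).carrier
      rw [mem_carrier_eBij]
      intro i
      rw [prod_apply, hm2 i]
      exact (uf.2 i).2.2
    · intro w
      apply Subtype.ext
      exact merge_proj (w : List (Σ i, ι i))
    · intro uf
      have hlen : ∀ i, ((uf.2 i : List (ι i))).length = uf.1.1.count i := by
        intro i
        obtain ⟨hf1, _⟩ := (uf.2 i).2
        rw [length_eq_sum_count, (uf.1.2 i)]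
        exact Finset.sum_congr rfl fun a _ => hf1 a
      obtain ⟨hm1, hm2⟩ := proj_merge uf.1.1 _ hlen
      refine Prod.ext (Subtype.ext hm1) (funext fun i => Subtype.ext (hm2 i))
  calc A.ncard = Nat.card A := (Nat.card_coe_set_eq A).symm
    _ = Nat.card (P × ∀ i, B i) := Nat.card_congr E
    _ = Nat.card P * ∏ i, Nat.card (B i) := by rw [Nat.card_prod, Nat.card_pi]
    _ = P.ncard * ∏ i, (B i).ncard := by
        rw [Nat.card_coe_set_eq]
        exact congrArg _ (Finset.prod_congr rfl fun i _ => Nat.card_coe_set_eq _)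

end Conj

end ISSAux

namespace ISSAux

section LinAlg

variable {m : ℕ} {r : Fin m → ℕ}

lemma tensor_mul (X Y : ∀ i, Matrix (Fin (r i)) (Fin (r i)) ℚ) (hXY : ∀ i, X i * Y i = 1) :
    (Matrix.of fun f g : ∀ i, Fin (r i) => ∏ i, X i (f i) (g i)) *
      (Matrix.of fun f g : ∀ i, Fin (r i) => ∏ i, Y i (f i) (g i)) = 1 := by
  classical
  ext a b
  rw [Matrix.mul_apply]
  simp only [Matrix.of_apply]
  rw [Finset.sum_congr rfl fun g _ => (Finset.prod_mul_distrib
    (f := fun i => X i (a i) (g i)) (g := fun i => Y i (g i) (b i))).symm]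
  rw [← Fintype.piFinset_univ,
    ← Finset.prod_univ_sum (fun i => (Finset.univ : Finset (Fin (r i))))
      (fun i x => X i (a i) x * Y i x (b i))]
  have h2 : ∀ i, (∑ x, X i (a i) x * Y i x (b i)) = (1 : Matrix (Fin (r i)) (Fin (r i)) ℚ) (a i) (b i) := by
    intro i; rw [← Matrix.mul_apply, hXY i]
  rw [Finset.prod_congr rfl fun i _ => h2 i]
  by_cases hab : a = b
  · subst hab; simp [Matrix.one_apply]
  · rw [Matrix.one_apply_ne hab]
    obtain ⟨k, hk⟩ := Function.ne_iff.mp hab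
    exact Finset.prod_eq_zero (Finset.mem_univ k) (Matrix.one_apply_ne hk)

lemma isUnit_tensor (M : ∀ i, Matrix (Fin (r i)) (Fin (r i)) ℚ) (hM : ∀ i, IsUnit (M i)) :
    IsUnit (Matrix.of fun f g : ∀ i, Fin (r i) => ∏ i, M i (f i) (g i)) := by
  have hdet : ∀ i, IsUnit (M i).det := fun i => (Matrix.isUnit_iff_isUnit_det _).mp (hM i)
  have h1 := tensor_mul M (fun i => (M i)⁻¹) (fun i => Matrix.mul_nonsing_inv _ (hdet i))
  exact ⟨⟨_, _, h1, mul_eq_one_comm.mp h1⟩, rfl⟩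

end LinAlg

section Main

variable {m : ℕ} {G : Fin m → Type} [∀ i, Group (G i)]
  {ι : Fin m → Type} [∀ i, Fintype (ι i)] [∀ i, DecidableEq (ι i)]

theorem key (s : ∀ i, ι i → G i) (r : ∀ i, ℕ)
    (C : ∀ i, Fin (r i) → ConjClasses (G i)) (α : ∀ i, Fin (r i) → ι i → ℕ)
    (hC : ∀ i, Function.Bijective (C i))
    (hLI : ∀ i, LinearIndependent ℚ (fun x => sigVec (s i) (C i) (α i x))) :
    ∃ (R : ℕ) (Cb : Fin R → ConjClasses (∀ i, G i)) (αb : Fin R → (Σ i, ι i) → ℕ),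
      Function.Bijective Cb ∧
      LinearIndependent ℚ (fun j => sigVec (fun p : Σ i, ι i =>
        (Pi.mulSingle p.1 (s p.1 p.2) : ∀ i, G i)) Cb (αb j)) ∧
      ((∀ i, ∀ x y : Fin (r i), x < y → sigVec (s i) (C i) (α i x) y = 0) →
        ∀ j j' : Fin R, j < j' → sigVec (fun p : Σ i, ι i =>
          (Pi.mulSingle p.1 (s p.1 p.2) : ∀ i, G i)) Cb (αb j) j' = 0) := by
  classical
  set K := ∀ i, Fin (r i) with hK
  letI : Fintype (Lex K) := Fintype.ofEquiv K toLex
  letI : LinearOrder (Lex K) :=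
    @Pi.Lex.linearOrder (Fin m) (fun i => Fin (r i)) inferInstance
      (inferInstance : WellFoundedLT (Fin m)) inferInstance
  set R := Fintype.card (Lex K) with hR
  set σ : Fin R ≃o Lex K := monoEquivOfFin (Lex K) rfl with hσ
  set g : Fin R → K := fun j => ofLex (σ j) with hg'
  have hg : Function.Bijective g := σ.toEquiv.bijective
  set Sg : (Σ i, ι i) → ∀ i, G i := fun p => Pi.mulSingle p.1 (s p.1 p.2) with hSg
  set Cb : Fin R → ConjClasses (∀ i, G i) := fun j => eBij (fun i => C i (g j i)) with hCb'
  set αb : Fin R → (Σ i, ι i) → ℕ := fun j p => α p.1 (g j p.1) p.2 with hαb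
  set cP : Fin R → ℕ :=
    fun j => {u : List (Fin m) | ∀ i, u.count i = ∑ a, α i (g j i) a}.ncard with hcP
  have hval : ∀ j j', sigVec Sg Cb (αb j) j' =
      (cP j : ℚ) * ∏ i, sigVec (s i) (C i) (α i (g j i)) (g j' i) := by
    intro j j'
    have h0 : (sigSet (αb j) ∩ {w | (w.map Sg).prod ∈ (Cb j').carrier}).ncard
        = cP j * ∏ i, (sigSet (α i (g j i)) ∩
            {w | (w.map (s i)).prod ∈ (C i (g j' i)).carrier}).ncard :=
      card_eq s (fun i => α i (g j i)) (fun i => C i (g j' i))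
    show ((sigSet (αb j) ∩ {w | (w.map Sg).prod ∈ (Cb j').carrier}).ncard : ℚ) = _
    rw [h0, Nat.cast_mul, Nat.cast_prod]
    exact congrArg (fun z => ((cP j : ℚ) * z : ℚ))
      (Finset.prod_congr rfl fun i _ => rfl)
  have hcP0 : ∀ j, (cP j : ℚ) ≠ 0 := fun j =>
    Nat.cast_ne_zero.mpr (patterns_ncard_pos _).ne'
  set MK : Matrix K K ℚ :=
    Matrix.of (fun f g' : K => ∏ i, sigVec (s i) (C i) (α i (f i)) (g' i)) with hMK'
  have hMK : IsUnit MK :=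
    isUnit_tensor (fun i => Matrix.of fun x y => sigVec (s i) (C i) (α i x) y)
      (fun i => Matrix.linearIndependent_rows_iff_isUnit.mp (hLI i))
  set MB : Matrix (Fin R) (Fin R) ℚ := Matrix.of fun j j' => sigVec Sg Cb (αb j) j' with hMB'
  have hMBeq : MB = Matrix.diagonal (fun j => (cP j : ℚ)) * (MK.submatrix g g) := by
    ext j j'
    rw [Matrix.diagonal_mul]
    simp only [Matrix.of_apply, Matrix.submatrix_apply, hMB', hMK']
    exact hval j j'
  have hMB : IsUnit MB := by
    rw [hMBeq]
    apply IsUnit.mul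
    · rw [Matrix.isUnit_iff_isUnit_det, Matrix.det_diagonal, isUnit_iff_ne_zero]
      exact Finset.prod_ne_zero_iff.mpr fun j _ => hcP0 j
    · have h1 := hMK.map (Matrix.reindexAlgEquiv ℚ ℚ (Equiv.ofBijective g hg).symm)
      have h2 : MK.submatrix g g
          = Matrix.reindexAlgEquiv ℚ ℚ (Equiv.ofBijective g hg).symm MK := by
        ext j j'
        simp [Matrix.reindexAlgEquiv_apply, Matrix.reindex_apply, Matrix.submatrix_apply]
      rwa [h2]
  have hli : LinearIndependent ℚ (fun j => sigVec Sg Cb (αb j)) :=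
    Matrix.linearIndependent_rows_iff_isUnit.mpr hMB
  have hCbB : Function.Bijective Cb :=
    eBij.bijective.comp ((Function.Bijective.piMap hC).comp hg)
  refine ⟨R, Cb, αb, hCbB, hli, ?_⟩
  intro htri j j' hjj
  rw [hval j j']
  have hlt : σ j < σ j' := σ.lt_iff_lt.mpr hjj
  obtain ⟨k, -, hk⟩ := hlt
  exact mul_eq_zero_of_right _
    (Finset.prod_eq_zero (Finset.mem_univ k) (htri k _ _ hk))

end Main

end ISSAux

/-- Let `G = G₁ × ⋯ × G_m` with each `Gᵢ` a finitely generated group having finitely many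
conjugacy classes, with generating family `s i : ι i → G i`, and equip `G` with the generating
family indexed by `Σ i, ι i` (the generator `(i, a)` being `s i a` placed in the `i`-th
coordinate).  (a) If each `Gᵢ` has an independent signature sequence, so does `G`.
(b) If each `Gᵢ` has an independent signature sequence with lower triangular independent
signature matrix, so does `G`. -/


theorem hasISS_pi_and_hasISSLT_pi {m : ℕ} {G : Fin m → Type} [∀ i, Group (G i)]
    {ι : Fin m → Type} [∀ i, Fintype (ι i)] [∀ i, DecidableEq (ι i)]
    (s : ∀ i, ι i → G i)
    (hgen : ∀ i, Subgroup.closure (Set.range (s i)) = ⊤)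
    [∀ i, Finite (ConjClasses (G i))] :
    ((∀ i, HasISS (s i)) →
      HasISS (fun p : Σ i, ι i => (Pi.mulSingle p.1 (s p.1 p.2) : ∀ i, G i))) ∧
    ((∀ i, HasISSLT (s i)) →
      HasISSLT (fun p : Σ i, ι i => (Pi.mulSingle p.1 (s p.1 p.2) : ∀ i, G i))) := by
  constructor
  · intro h
    unfold HasISS at h ⊢
    choose r C α hC hLI using h
    obtain ⟨R, Cb, αb, h1, h2, -⟩ := ISSAux.key s r C α hC hLI
    exact ⟨R, Cb, αb, h1, h2⟩
  · intro h
    unfold HasISSLT at h ⊢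
    choose r C α hC hLI htri using h
    obtain ⟨R, Cb, αb, h1, h2, h3⟩ := ISSAux.key s r C α hC hLI
    exact ⟨R, Cb, αb, h1, h2, h3 htri⟩
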